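/- Every X-AR word s is ω-power free: for every nonempty factor u of s there exists an integer p > 0 such that u^p is not a factor of s. -/

import Mathlib

open List

/-- Right palindromic closure: `w⁺ = u Q u~` where `Q` is the longest palindromic
suffix of `w = uQ`; equivalently the shortest palindrome having `w` as a prefix. -/
noncomputable def palClosure {A : Type*} (w : List A) : List A :=
  letI : DecidablePred fun k => (w.drop k).reverse = w.drop k :=
    fun _ => Classical.propDecidable _
  w ++ (w.take (Nat.find (⟨w.length, by simp⟩ :
    ∃ k, (w.drop k).reverse = w.drop k))).reverse

/-- The palindromization map `ψ_X` relative to a code `X`, evaluated on the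
(unique) `X`-factorization `l = [x₁, …, xₙ]` of a word of `X*`. -/
noncomputable def psiList {A : Type*} (l : List (List A)) : List A :=
  l.foldl (fun p x => palClosure (p ++ x)) []

/-- The (usual) palindromization map `ψ` on words, letter by letter. -/
noncomputable def psiWord {A : Type*} (w : List A) : List A :=
  w.foldl (fun p a => palClosure (p ++ [a])) []

/-- `X` is a code: nonempty words with unique factorization over `X`. -/
def IsCode {A : Type*} (X : Set (List A)) : Prop :=
  (∀ x ∈ X, x ≠ []) ∧
  ∀ l l' : List (List A), (∀ w ∈ l, w ∈ X) → (∀ w ∈ l', w ∈ X) →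
    l.flatten = l'.flatten → l = l'

/-- `X` is a prefix code: nonempty words, none a proper prefix of another. -/
def IsPrefixCode {A : Type*} (X : Set (List A)) : Prop :=
  (∀ x ∈ X, x ≠ []) ∧ ∀ x ∈ X, ∀ y ∈ X, x <+: y → x = y

/-- `X` is a maximal prefix code over `A`. -/
def IsMaximalPrefixCode {A : Type*} (X : Set (List A)) : Prop :=
  IsPrefixCode X ∧ ∀ Y : Set (List A), IsPrefixCode Y → X ⊆ Y → X = Y

/-- `w ∈ X*`. -/
def InStar {A : Type*} (X : Set (List A)) (w : List A) : Prop :=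
  ∃ l : List (List A), (∀ u ∈ l, u ∈ X) ∧ l.flatten = w

/-- The finite word `w` is a prefix of the infinite word `s`. -/
def PrefixOfInf {A : Type*} (w : List A) (s : ℕ → A) : Prop :=
  ∀ i : ℕ, ∀ h : i < w.length, w.get ⟨i, h⟩ = s i

/-- The finite word `w` is a factor of the infinite word `s`. -/
def FactorOfInf {A : Type*} (w : List A) (s : ℕ → A) : Prop :=
  ∃ i : ℕ, w = List.ofFn fun k : Fin w.length => s (i + k.1)

/-- `X` has finite deciphering delay. -/
def FiniteDecipheringDelay {A : Type*} (X : Set (List A)) : Prop :=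
  ∃ k : ℕ, ∀ x ∈ X, ∀ x' ∈ X,
    (∃ (l l' : List (List A)) (r : List A),
      (∀ w ∈ l, w ∈ X) ∧ l.length = k ∧ (∀ w ∈ l', w ∈ X) ∧
      x ++ l.flatten ++ r = x' ++ l'.flatten) → x = x'

/-- The sequence `y = y₁y₂⋯ ∈ X^ω` is alternating. -/
def Alternating {A : Type*} (y : ℕ → List A) : Prop :=
  ∃ a b : A, a ≠ b ∧ ∃ (lam : List A) (idx : ℕ → ℕ), StrictMono idx ∧
    ∀ k : ℕ, (lam ++ [a]) <+: y (idx (2 * k)) ∧ (lam ++ [b]) <+: y (idx (2 * k + 1))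

/-- The infinite word `s` is ultimately periodic. -/
def UltimatelyPeriodic {A : Type*} (s : ℕ → A) : Prop :=
  ∃ p : ℕ, 0 < p ∧ ∃ N : ℕ, ∀ n ≥ N, s (n + p) = s n

/-- The infinite word `s` is uniformly recurrent: every factor occurs in every
sufficiently long factor of `s`. -/
def UniformlyRecurrent {A : Type*} (s : ℕ → A) : Prop :=
  ∀ w : List A, FactorOfInf w s →
    ∃ N : ℕ, ∀ i : ℕ, w <:+: List.ofFn fun k : Fin N => s (i + k.1)

/-- Factor complexity of the infinite word `s`. -/
noncomputable def complexity {A : Type*} (s : ℕ → A) (n : ℕ) : ℕ :=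
  {u : List A | u.length = n ∧ FactorOfInf u s}.ncard

/-- A word `w` is primitive if it is not a proper power. -/
def Primitive {A : Type*} (w : List A) : Prop :=
  ∀ (v : List A) (n : ℕ), 1 < n → w ≠ (List.replicate n v).flatten


section AuxAR

variable {A : Type*}

/-- `v` occurs in `w` at position `o`. -/
def OccAtAR (v w : List A) (o : ℕ) : Prop :=
  o + v.length ≤ w.length ∧ v <+: w.drop o

lemma occAtAR_getElem {v w : List A} {o : ℕ} (h : OccAtAR v w o) (i : ℕ)
    (hi : i < v.length) :
    v[i] = w[o + i]'(by have := h.1; omega) := by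
  obtain ⟨hb, r, hr⟩ := h
  have h1 : v[i] = (v ++ r)[i]'(by simp; omega) := (List.getElem_append_left hi).symm
  have h2 : (v ++ r)[i]'(by simp; omega)
      = (w.drop o)[i]'(by rw [← hr]; simp; omega) := List.getElem_of_eq hr _
  rw [h1, h2]
  simp

lemma occAtAR_of_getElem {v w : List A} {o : ℕ} (hb : o + v.length ≤ w.length)
    (h : ∀ i (hi : i < v.length), v[i] = w[o + i]'(by omega)) : OccAtAR v w o := by
  refine ⟨hb, ?_⟩
  have hv : v = (w.drop o).take v.length := by
    apply List.ext_getElem (by simp; omega)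
    intro i h1 h2
    simp only [List.getElem_take, List.getElem_drop]
    exact h i h1
  rw [hv]
  exact List.take_prefix _ _

lemma OccAtAR.mono {v w w' : List A} {o : ℕ} (h : OccAtAR v w o) (hw : w <+: w') :
    OccAtAR v w' o :=
  ⟨le_trans h.1 hw.length_le, h.2.trans (hw.drop o)⟩

lemma OccAtAR.mirror {v w : List A} {o : ℕ} (h : OccAtAR v w o)
    (hv : v.reverse = v) (hw : w.reverse = w) :
    OccAtAR v w (w.length - o - v.length) := by
  obtain ⟨hb, r, hr⟩ := h
  have hlr : r.length = w.length - o - v.length := by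
    have := congrArg List.length hr
    simp at this
    omega
  have hw2 : w = r.reverse ++ (v ++ (w.take o).reverse) := by
    conv_lhs => rw [← hw]
    conv_lhs => rw [← List.take_append_drop o w, ← hr]
    simp only [List.reverse_append, List.reverse_reverse, hv, List.append_assoc]
  refine ⟨by omega, ?_⟩
  have hnum : w.length - o - v.length = r.reverse.length := by
    simp [hlr]
  rw [hnum, hw2, List.drop_left]
  exact List.prefix_append _ _

lemma palClosure_spec (w : List A) :
    ∃ k, k ≤ w.length ∧ (w.drop k).reverse = w.drop k ∧
      palClosure w = w ++ (w.take k).reverse := by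
  letI : DecidablePred fun k => (w.drop k).reverse = w.drop k :=
    fun _ => Classical.propDecidable _
  refine ⟨Nat.find (⟨w.length, by simp⟩ :
      ∃ k, (w.drop k).reverse = w.drop k), ?_, ?_, ?_⟩
  · exact Nat.find_le (by simp)
  · exact Nat.find_spec (⟨w.length, by simp⟩ : ∃ k, (w.drop k).reverse = w.drop k)
  · rfl

lemma palClosure_prefix (w : List A) : w <+: palClosure w := by
  obtain ⟨k, _, _, heq⟩ := palClosure_spec w
  rw [heq]
  exact List.prefix_append _ _

lemma getElem_congr_idx' {l : List A} {i j : ℕ} (h : i = j) (hi : i < l.length) :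
    l[i] = l[j]'(h ▸ hi) := by cases h; rfl

lemma palClosure_reverse (w : List A) : (palClosure w).reverse = palClosure w := by
  obtain ⟨k, _, hpal, heq⟩ := palClosure_spec w
  rw [heq]
  have hw : w = w.take k ++ w.drop k := (List.take_append_drop k w).symm
  generalize hT : w.take k = t at hw ⊢
  generalize hD : w.drop k = d at hw hpal
  rw [hw]
  simp [List.reverse_append, hpal, List.append_assoc]

lemma flatten_replicate_length (u : List A) (p : ℕ) :
    ((List.replicate p u).flatten).length = p * u.length := by
  induction p with
  | zero => simp
  | succ p ih =>
    rw [List.replicate_succ, List.flatten_cons, List.length_append, ih,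
      Nat.succ_mul]
    omega

lemma flatten_replicate_period (u : List A) (p a : ℕ)
    (h1 : a + u.length < ((List.replicate p u).flatten).length) :
    ((List.replicate p u).flatten)[a + u.length]
      = ((List.replicate p u).flatten)[a]'(by omega) := by
  have hcomm : u ++ (List.replicate p u).flatten
      = (List.replicate p u).flatten ++ u := by
    have e1 : (List.replicate (p + 1) u).flatten
        = u ++ (List.replicate p u).flatten := by
      rw [List.replicate_succ, List.flatten_cons]
    have e2 : (List.replicate (p + 1) u).flatten
        = (List.replicate p u).flatten ++ u := by
      rw [List.replicate_succ', List.flatten_append]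
      simp
    rw [← e1, e2]
  have h3 : (u ++ (List.replicate p u).flatten)[u.length + a]'(by
      simp only [List.length_append]; omega)
      = ((List.replicate p u).flatten)[a]'(by omega) := by
    rw [List.getElem_append_right (by omega : u.length ≤ u.length + a)]
    exact getElem_congr_idx' (by omega) _
  have h4 : ((List.replicate p u).flatten ++ u)[u.length + a]'(by
      simp only [List.length_append]; omega)
      = ((List.replicate p u).flatten)[u.length + a]'(by omega) :=
    List.getElem_append_left (by omega)
  have h5 : (u ++ (List.replicate p u).flatten)[u.length + a]'(by
      simp only [List.length_append]; omega)
      = ((List.replicate p u).flatten ++ u)[u.length + a]'(by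
        simp only [List.length_append]; omega) :=
    List.getElem_of_eq hcomm _
  have h6 : ((List.replicate p u).flatten)[u.length + a]'(by omega)
      = ((List.replicate p u).flatten)[a]'(by omega) := by
    rw [← h4, ← h5, h3]
  rw [getElem_congr_idx' (show a + u.length = u.length + a by omega) (by omega)]
  exact h6

lemma palClosure_length (w : List A) : (palClosure w).length ≤ 2 * w.length := by
  obtain ⟨k, hk, _, heq⟩ := palClosure_spec w
  rw [heq]
  simp [List.length_take]
  omega

lemma densityAR {P : ℕ → List A} {C : ℕ}
    (hpal : ∀ n, (P n).reverse = P n)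
    (hmono : ∀ a b, a ≤ b → P a <+: P b)
    (hgrow : ∀ n, (P (n + 1)).length ≤ 2 * (P n).length + 2 * C)
    (k : ℕ) :
    ∀ j, k ≤ j → ∀ t, t + (P k).length ≤ (P j).length →
      ∃ o, OccAtAR (P k) (P j) o ∧ o ≤ t + ((P k).length + 2 * C) ∧
        t ≤ o + ((P k).length + 2 * C) := by
  intro j hj
  induction j, hj using Nat.le_induction with
  | base =>
    intro t ht
    have ht0 : t = 0 := by omega
    subst ht0
    exact ⟨0, ⟨by omega, by simpa using List.prefix_refl (P k)⟩, by omega, by omega⟩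
  | succ j hkj ih =>
    intro t ht
    have hLkj : (P k).length ≤ (P j).length := (hmono k j hkj).length_le
    have hgj := hgrow j
    have hjp : P j <+: P (j + 1) := hmono j (j + 1) (by omega)
    by_cases h1 : t + (P k).length ≤ (P j).length
    · obtain ⟨o, ho, h2, h3⟩ := ih t h1
      exact ⟨o, ho.mono hjp, h2, h3⟩
    · by_cases h2 : t ≤ ((P j).length - (P k).length) + ((P k).length + 2 * C)
      · have hocc0 : OccAtAR (P k) (P j) 0 :=
          ⟨by omega, by simpa using hmono k j hkj⟩
        have hocc := hocc0.mirror (hpal k) (hpal j)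
        rw [Nat.sub_zero] at hocc
        exact ⟨(P j).length - (P k).length, hocc.mono hjp, by omega, by omega⟩
      · have ht' : ((P (j + 1)).length - t - (P k).length) + (P k).length
            ≤ (P j).length := by omega
        obtain ⟨o, ho, hb1, hb2⟩ := ih ((P (j + 1)).length - t - (P k).length) ht'
        have hob : o + (P k).length ≤ (P j).length := ho.1
        have hoP1 : OccAtAR (P k) (P (j + 1)) o := ho.mono hjp
        have hm := hoP1.mirror (hpal k) (hpal (j + 1))
        refine ⟨(P (j + 1)).length - o - (P k).length, hm, by omega, by omega⟩

end AuxAR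

/-- Every `X`-AR word is `ω`-power free. -/
theorem stmt9 {A : Type*} [Fintype A] (hd : 1 < Fintype.card A)
    (X : Set (List A)) (hfin : X.Finite) (hX : IsMaximalPrefixCode X)
    (y : ℕ → List A) (hy : ∀ i, y i ∈ X)
    (hpers : ∀ x ∈ X, ∀ N : ℕ, ∃ i ≥ N, y i = x)
    (s : ℕ → A)
    (hs : ∀ n : ℕ, PrefixOfInf (psiList (List.ofFn fun i : Fin n => y i.1)) s) :
    ∀ u : List A, u ≠ [] → FactorOfInf u s →
      ∃ p : ℕ, 0 < p ∧ ¬ FactorOfInf (List.flatten (List.replicate p u)) s := by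
    classical
  intro u hu _hufac
  by_contra hcon
  push_neg at hcon
  -- `hcon : ∀ p, 0 < p → FactorOfInf ((replicate p u).flatten) s`
  have hm : 0 < u.length := List.length_pos_iff.mpr hu
  -- the sequence of palindromic prefixes
  let P : ℕ → List A := fun n => psiList (List.ofFn fun i : Fin n => y i.1)
  have hsP : ∀ n, PrefixOfInf (P n) s := hs
  have hne : ∀ i, y i ≠ [] := fun i => hX.1.1 _ (hy i)
  obtain ⟨C, hCX⟩ : ∃ C : ℕ, ∀ x ∈ X, x.length ≤ C := by
    obtain ⟨C, hC⟩ := (hfin.image List.length).bddAbove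
    exact ⟨C, fun x hx => hC (Set.mem_image_of_mem _ hx)⟩
  have hC : ∀ i, (y i).length ≤ C := fun i => hCX _ (hy i)
  have hofn : ∀ n : ℕ, (List.ofFn fun i : Fin (n + 1) => y i.1)
      = (List.ofFn fun i : Fin n => y i.1) ++ [y n] := by
    intro n
    rw [List.ofFn_succ']
    simp [List.concat_eq_append]
  have hPsucc : ∀ n, P (n + 1) = palClosure (P n ++ y n) := by
    intro n
    show psiList _ = palClosure (psiList _ ++ y n)
    rw [hofn n]
    simp [psiList, List.foldl_append]
  have hP0 : P 0 = [] := by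
    show psiList _ = []
    simp [psiList]
  have hpal : ∀ n, (P n).reverse = P n := by
    intro n
    rcases n with _ | n
    · rw [hP0]; rfl
    · rw [hPsucc n]; exact palClosure_reverse _
  have hpre1 : ∀ n, P n <+: P (n + 1) := by
    intro n
    rw [hPsucc n]
    exact (List.prefix_append _ _).trans (palClosure_prefix _)
  have hmono : ∀ a b, a ≤ b → P a <+: P b := by
    intro a b hab
    induction b, hab using Nat.le_induction with
    | base => exact List.prefix_refl _
    | succ b hab ih => exact ih.trans (hpre1 b)
  have hlen1 : ∀ n, (P n).length + 1 ≤ (P (n + 1)).length := by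
    intro n
    have h1 : (P n ++ y n) <+: P (n + 1) := by
      rw [hPsucc n]; exact palClosure_prefix _
    have h2 := h1.length_le
    have h3 : 0 < (y n).length := List.length_pos_iff.mpr (hne n)
    simp only [List.length_append] at h2
    omega
  have hlen : ∀ n, n ≤ (P n).length := by
    intro n
    induction n with
    | zero => omega
    | succ n ih => have := hlen1 n; omega
  have hgrow : ∀ n, (P (n + 1)).length ≤ 2 * (P n).length + 2 * C := by
    intro n
    have h1 := palClosure_length (P n ++ y n)
    rw [← hPsucc n] at h1
    simp only [List.length_append] at h1
    have := hC n
    omega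
  have hsg : ∀ n i (h : i < (P n).length), (P n)[i] = s i := by
    intro n i h
    have := hsP n i h
    rwa [List.get_eq_getElem] at this
  -- each element of X follows infinitely many palindromic prefixes
  have hfollow : ∀ x, x ∈ X → ∀ N : ℕ, ∃ n, N ≤ (P n).length ∧
      ∀ t (ht : t < x.length), x[t] = s ((P n).length + t) := by
    intro x hx N
    obtain ⟨i, hiN, hyi⟩ := hpers x hx N
    refine ⟨i, le_trans hiN (hlen i), ?_⟩
    intro t ht
    have hp1 : (P i ++ y i) <+: P (i + 1) := by
      rw [hPsucc i]; exact palClosure_prefix _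
    have hocc : OccAtAR x (P (i + 1)) (P i).length := by
      have h0 : OccAtAR x (P i ++ y i) (P i).length := by
        refine ⟨by simp [hyi], ?_⟩
        rw [List.drop_left, hyi]
      exact h0.mono hp1
    have he := occAtAR_getElem hocc t ht
    rw [he]
    have hb := hocc.1
    exact hsg (i + 1) _ (by omega)
  -- factors of s
  have hfac : ∀ w : List A, FactorOfInf w s →
      ∃ i, ∀ n (h : n < w.length), w[n] = s (i + n) := by
    intro w hw
    obtain ⟨i, hi⟩ := hw
    refine ⟨i, fun n h => ?_⟩
    have h2 : w[n] = (List.ofFn fun k : Fin w.length => s (i + k.1))[n]'(by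
        rw [← hi]; exact h) := List.getElem_of_eq hi h
    rw [h2, List.getElem_ofFn]
  have hoccP : ∀ (w : List A) (i J : ℕ),
      (∀ n (h : n < w.length), w[n] = s (i + n)) →
      i + w.length ≤ (P J).length → OccAtAR w (P J) i := by
    intro w i J ha hb
    refine occAtAR_of_getElem hb (fun n hn => ?_)
    rw [ha n hn]
    exact (hsg J (i + n) (by omega)).symm
  -- every palindromic prefix has period m
  have hPkper : ∀ (k a : ℕ) (h1 : a + u.length < (P k).length),
      (P k)[a + u.length]'(by omega) = (P k)[a]'(by omega) := by
    intro k a h1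
    set g := (P k).length + 2 * C with hgdef
    set W := (P k).length + 2 * g with hWdef
    obtain ⟨i, hagr⟩ := hfac _ (hcon (W + 1) (Nat.succ_pos _))
    have hvl := flatten_replicate_length u (W + 1)
    have hWm : W + 1 ≤ (W + 1) * u.length := Nat.le_mul_of_pos_right _ hm
    have hJlen : i + (W + 1) * u.length ≤ (P (i + (W + 1) * u.length)).length :=
      hlen (i + (W + 1) * u.length)
    set J := i + (W + 1) * u.length with hJdef
    have hoccv : OccAtAR ((List.replicate (W + 1) u).flatten) (P J) i :=
      hoccP _ i J hagr (by rw [hvl]; omega)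
    have hkJ : k ≤ J := by
      have := hlen k
      omega
    obtain ⟨o, hocck, hb1, hb2⟩ := densityAR hpal hmono hgrow k J hkJ (i + g)
      (by omega)
    obtain ⟨b, rfl⟩ : ∃ b, o = i + b := ⟨o - i, by omega⟩
    have hoK := hocck.1
    have hbW : b + (P k).length ≤ W := by omega
    have hPk_v : ∀ x (hx : x < (P k).length),
        (P k)[x] = ((List.replicate (W + 1) u).flatten)[b + x]'(by
          rw [hvl]; omega) := by
      intro x hx
      have e1 := occAtAR_getElem hocck x hx
      have e2 := occAtAR_getElem hoccv (b + x) (by rw [hvl]; omega)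
      rw [e1, e2]
      exact getElem_congr_idx' (by omega) _
    have e3 := hPk_v (a + u.length) h1
    have e4 := hPk_v a (by omega)
    rw [e3, e4]
    rw [getElem_congr_idx' (show b + (a + u.length) = (b + a) + u.length by omega)
      (by rw [hvl]; omega)]
    exact flatten_replicate_period u (W + 1) (b + a) (by rw [hvl]; omega)
  -- s is purely periodic with period m
  have hsm : ∀ i, s (i + u.length) = s i := by
    intro i
    have hk := hlen (i + u.length + 1)
    have h1 := hPkper (i + u.length + 1) i (by omega)
    rw [← hsg (i + u.length + 1) (i + u.length) (by omega), ← hsg (i + u.length + 1) i (by omega)]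
    exact h1
  -- the minimal period q
  set Per : Set ℕ := {d | 0 < d ∧ ∀ i, s (i + d) = s i} with hPerdef
  have hmPer : u.length ∈ Per := ⟨hm, hsm⟩
  set q := sInf Per with hqdef
  obtain ⟨hq0, hqper⟩ : 0 < q ∧ ∀ i, s (i + q) = s i := Nat.sInf_mem ⟨u.length, hmPer⟩
  have hmul : ∀ (t a : ℕ), s (a + t * q) = s a := by
    intro t
    induction t with
    | zero => simp
    | succ t ih =>
      intro a
      have h : a + (t + 1) * q = (a + t * q) + q := by ring
      rw [h, hqper, ih]
  have hsmod : ∀ a, s a = s (a % q) := by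
    intro a
    conv_lhs => rw [← Nat.mod_add_div' a q]
    exact hmul _ _
  have hcong : ∀ a b, a % q = b % q → s a = s b := by
    intro a b h
    rw [hsmod a, hsmod b, h]
  have hdiv : ∀ d, (∀ i, s (i + d) = s i) → q ∣ d := by
    intro d
    induction d using Nat.strong_induction_on with
    | _ d ih =>
      intro hd
      rcases Nat.lt_or_ge d q with hlt | hge
      · rcases Nat.eq_zero_or_pos d with rfl | hd0
        · exact dvd_zero q
        · have hle : q ≤ d := Nat.sInf_le (⟨hd0, hd⟩ : d ∈ Per)
          omega
      · have hstep : ∀ i, s (i + (d - q)) = s i := by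
          intro i
          have h1 := hqper (i + (d - q))
          have h2 : i + (d - q) + q = i + d := by omega
          rw [h2] at h1
          rw [← h1]
          exact hd i
        have hsub := ih (d - q) (by omega) hstep
        have h3 : d = (d - q) + q := by omega
        rw [h3]
        exact Nat.dvd_add hsub dvd_rfl
  -- palindromic symmetry
  have hsym : ∀ k i, i < (P k).length → s i = s ((P k).length - 1 - i) := by
    intro k i hi
    have h1 := List.getElem_reverse (l := P k) (i := i) (by simpa using hi)
    have h2 : (P k).reverse[i]'(by simpa using hi) = (P k)[i] :=
      List.getElem_of_eq (hpal k) _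
    rw [← hsg k i hi, ← hsg k _ (by omega : (P k).length - 1 - i < (P k).length)]
    rw [← h2]
    exact h1
  -- lengths of long palindromic prefixes are congruent mod q
  have hdcong : ∀ k k', q ≤ (P k).length → (P k).length ≤ (P k').length →
      (P k).length % q = (P k').length % q := by
    intro k k' hk hkk'
    have hres : ∀ j, j < (P k).length →
        s (j + ((P k').length - (P k).length)) = s j := by
      intro j hj
      have hi1 : (P k).length - 1 - j < (P k).length := by omega
      have e1 := hsym k ((P k).length - 1 - j) hi1
      have e2 := hsym k' ((P k).length - 1 - j) (by omega)
      have h3 : (P k).length - 1 - ((P k).length - 1 - j) = j := by omega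
      have h4 : (P k').length - 1 - ((P k).length - 1 - j)
          = j + ((P k').length - (P k).length) := by omega
      rw [h3] at e1
      rw [h4] at e2
      exact e2.symm.trans e1
    have hper_d : ∀ i, s (i + ((P k').length - (P k).length)) = s i := by
      intro i
      have h1 : s (i + ((P k').length - (P k).length))
          = s (i % q + ((P k').length - (P k).length)) :=
        hcong _ _ (Nat.mod_add_mod i q _).symm
      have h2 : i % q < (P k).length := lt_of_lt_of_le (Nat.mod_lt _ hq0) hk
      rw [h1, hres _ h2]
      exact hcong _ _ (Nat.mod_mod _ _)
    obtain ⟨c, hc⟩ := hdiv _ hper_d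
    have h5 : (P k').length = (P k).length + q * c := by omega
    rw [h5, Nat.add_mul_mod_self_left]
  -- two words following palindromic prefixes are prefix-comparable
  have hkey : ∀ (a b : List A) (na nb : ℕ), a.length ≤ b.length →
      (∀ t (ht : t < a.length), a[t] = s (na + t)) →
      (∀ t (ht : t < b.length), b[t] = s (nb + t)) →
      na % q = nb % q → a <+: b := by
    intro a b na nb hab ha hb hmod
    have heq : a = b.take a.length := by
      apply List.ext_getElem (by simp; omega)
      intro t h1 h2
      simp only [List.getElem_take]
      rw [ha t h1, hb t (by omega)]
      exact hcong _ _ (by rw [Nat.add_mod, hmod, ← Nat.add_mod])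
    rw [heq]
    exact List.take_prefix _ _
  -- all elements of X are equal
  have hXeq : ∀ x ∈ X, ∀ x' ∈ X, x = x' := by
    intro x hx x' hx'
    obtain ⟨n, hn, ha⟩ := hfollow x hx q
    obtain ⟨n', hn', ha'⟩ := hfollow x' hx' q
    have hmod : (P n).length % q = (P n').length % q := by
      rcases le_total (P n).length (P n').length with h | h
      · exact hdcong n n' hn h
      · exact (hdcong n' n hn' h).symm
    rcases le_total x.length x'.length with h | h
    · exact hX.1.2 x hx x' hx' (hkey x x' _ _ h ha ha' hmod)
    · exact (hX.1.2 x' hx' x hx (hkey x' x _ _ h ha' ha hmod.symm)).symm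
  -- contradiction with maximality of the prefix code
  obtain ⟨c, t0, hct⟩ : ∃ c t0, y 0 = c :: t0 := by
    cases hy0eq : y 0 with
    | nil => exact absurd hy0eq (hne 0)
    | cons c t0 => exact ⟨c, t0, rfl⟩
  obtain ⟨e, he⟩ := Fintype.exists_ne_of_one_lt_card hd c
  have hx0 : y 0 ∈ X := hy 0
  have hYpc : IsPrefixCode (insert [e] X) := by
    constructor
    · intro z hz
      rcases Set.mem_insert_iff.mp hz with rfl | hz'
      · simp
      · exact hX.1.1 z hz'
    · intro a ha b hb hab
      rcases Set.mem_insert_iff.mp ha with rfl | ha' <;>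
        rcases Set.mem_insert_iff.mp hb with rfl | hb'
      · rfl
      · exfalso
        have hb0 : b = c :: t0 := by rw [hXeq b hb' _ hx0, hct]
        obtain ⟨r, hr⟩ := hab
        rw [hb0] at hr
        have : e = c := by
          have := congrArg (fun l => l.head?) hr
          simpa using this
        exact he this
      · exfalso
        have ha0 : a = c :: t0 := by rw [hXeq a ha' _ hx0, hct]
        obtain ⟨r, hr⟩ := hab
        rw [ha0] at hr
        have : c = e := by
          have := congrArg (fun l => l.head?) hr
          simpa using this
        exact he this.symm
      · exact hX.1.2 a ha' b hb' hab
  have hXY := hX.2 _ hYpc (Set.subset_insert _ _)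
  have heX : [e] ∈ X := by rw [hXY]; exact Set.mem_insert _ _
  have hfin2 := hXeq _ heX _ hx0
  rw [hct] at hfin2
  have : e = c := by
    have := congrArg (fun l => l.head?) hfin2
    simpa using this
  exact he this
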